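/- Let n ∈ {10, 11, 12}, set a = 6/(n−9), and let p_k/q_k (k ≥ 1) be the convergents of the simple continued fraction expansion of √n. Then for every k ≥ 1, the numerators and denominators satisfy the two-step recurrence p_{k+2} = (3a+1) p_k + (9a+6) q_k and q_{k+2} = a p_k + (3a+1) q_k. -/
import Mathlib


/-!
For `n ∈ {10, 11, 12}`, the convergents `p_k / q_k` (k ≥ 1) of the simple
continued fraction expansion of `√n` are given, in Mathlib's terms, by
`(GenContFract.of (√n)).nums (k-1) / (GenContFract.of (√n)).dens (k-1)`
(Mathlib's indexing starts at 0, so the paper's `k`-th convergent is the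
`(k-1)`-st in Mathlib).  In particular the paper's `p_{k+2}` is
`nums (k+1)`.
-/

open GenContFract

private lemma my_stream_lemma (v d : ℝ) (a : ℤ)
    (hd : 1 ≤ d) (had : (a : ℝ) * d = 6)
    (h3 : 3 < v) (h4 : v < 4) (hvd : (v - 3) * (v + 3) = d) :
    ∀ k : ℕ,
      IntFractPair.stream v (2 * k + 1) = some ⟨a, (v - 3) / d⟩ ∧
      IntFractPair.stream v (2 * k + 2) = some ⟨6, v - 3⟩ := by
  have hd0 : (0 : ℝ) < d := by linarith
  have hv3 : v - 3 ≠ 0 := by intro h; nlinarith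
  have hfr3 : ((⟨a, (v - 3) / d⟩ : IntFractPair ℝ)).fr ≠ 0 := div_ne_zero hv3 hd0.ne'
  have step1 : IntFractPair.of ((v - 3)⁻¹) = (⟨a, (v - 3) / d⟩ : IntFractPair ℝ) := by
    have hinv : (v - 3)⁻¹ = (v + 3) / d := by
      refine inv_eq_of_mul_eq_one_right ?_
      field_simp
      linarith [hvd]
    have hfl : ⌊(v + 3) / d⌋ = a := by
      rw [Int.floor_eq_iff]
      have hex : ((a : ℝ) + 1) * d = 6 + d := by rw [add_mul, had, one_mul]
      constructor
      · rw [le_div_iff₀ hd0]; linarith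
      · rw [div_lt_iff₀ hd0]; push_cast; rw [hex]; linarith
    have hfr : Int.fract ((v + 3) / d) = (v - 3) / d := by
      rw [Int.fract, hfl]
      field_simp
      linarith
    rw [hinv]
    simp only [IntFractPair.of, hfl, hfr]
  have step2 : IntFractPair.of (((v - 3) / d)⁻¹) = (⟨6, v - 3⟩ : IntFractPair ℝ) := by
    have hinv : ((v - 3) / d)⁻¹ = v + 3 := by
      refine inv_eq_of_mul_eq_one_right ?_
      field_simp
      linarith [hvd]
    have hfl : ⌊v + 3⌋ = 6 := by
      rw [Int.floor_eq_iff]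
      push_cast
      constructor <;> linarith
    have hfr : Int.fract (v + 3) = v - 3 := by
      rw [Int.fract, hfl]; push_cast; ring
    rw [hinv]
    simp only [IntFractPair.of, hfl, hfr]
  intro k
  induction k with
  | zero =>
    have h0 : IntFractPair.stream v 0 = some (IntFractPair.of v) := IntFractPair.stream_zero v
    have hfl : ⌊v⌋ = 3 := by
      rw [Int.floor_eq_iff]
      push_cast
      constructor <;> linarith
    have hofv : IntFractPair.of v = (⟨3, v - 3⟩ : IntFractPair ℝ) := by
      have hfr : Int.fract v = v - 3 := by rw [Int.fract, hfl]; push_cast; ring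
      simp only [IntFractPair.of, hfl, hfr]
    rw [hofv] at h0
    have h1 : IntFractPair.stream v 1 = some ⟨a, (v - 3) / d⟩ := by
      have := IntFractPair.stream_succ_of_some h0 hv3
      rw [this]
      simp only [step1]
    refine ⟨by simpa using h1, ?_⟩
    have := IntFractPair.stream_succ_of_some h1 hfr3
    rw [show 2 * 0 + 2 = 1 + 1 by ring, this]
    simp only [step2]
  | succ k ih =>
    have h1 : IntFractPair.stream v (2 * (k + 1) + 1) = some ⟨a, (v - 3) / d⟩ := by
      have := IntFractPair.stream_succ_of_some ih.2 hv3
      rw [show 2 * (k + 1) + 1 = 2 * k + 2 + 1 by ring, this]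
      simp only [step1]
    refine ⟨h1, ?_⟩
    have := IntFractPair.stream_succ_of_some h1 hfr3
    rw [show 2 * (k + 1) + 2 = 2 * (k + 1) + 1 + 1 by ring, this]
    simp only [step2]

private lemma my_seq_lemma (v d : ℝ) (a : ℤ)
    (hd : 1 ≤ d) (had : (a : ℝ) * d = 6)
    (h3 : 3 < v) (h4 : v < 4) (hvd : (v - 3) * (v + 3) = d) :
    ∀ k : ℕ,
      (GenContFract.of v).s.get? (2 * k) = some ⟨1, ((a : ℤ) : ℝ)⟩ ∧
      (GenContFract.of v).s.get? (2 * k + 1) = some ⟨1, (6 : ℝ)⟩ := by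
  intro k
  obtain ⟨hodd, heven⟩ := my_stream_lemma v d a hd had h3 h4 hvd k
  constructor
  · exact get?_of_eq_some_of_succ_get?_intFractPair_stream hodd
  · have := get?_of_eq_some_of_succ_get?_intFractPair_stream heven
    simpa using this

private lemma my_master (g : GenContFract ℝ) (a : ℝ)
    (hh : g.h = 3)
    (hs : ∀ k : ℕ, g.s.get? (2 * k) = some ⟨1, a⟩ ∧ g.s.get? (2 * k + 1) = some ⟨1, (6 : ℝ)⟩) :
    ∀ m : ℕ,
      (g.nums (m + 2) = (3 * a + 1) * g.nums m + (9 * a + 6) * g.dens m ∧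
       g.dens (m + 2) = a * g.nums m + (3 * a + 1) * g.dens m) := by
  have hany : ∀ k : ℕ, ∃ b : ℝ, g.s.get? k = some ⟨1, b⟩ ∧ g.s.get? (k + 2) = some ⟨1, b⟩ := by
    intro k
    rcases Nat.even_or_odd k with ⟨j, hj⟩ | ⟨j, hj⟩
    · refine ⟨a, ?_, ?_⟩
      · rw [hj, show j + j = 2 * j by ring]; exact (hs j).1
      · rw [hj, show j + j + 2 = 2 * (j + 1) by ring]; exact (hs (j + 1)).1
    · refine ⟨6, ?_, ?_⟩
      · rw [hj]; exact (hs j).2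
      · rw [hj, show 2 * j + 1 + 2 = 2 * (j + 1) + 1 by ring]; exact (hs (j + 1)).2
  have h0 : g.s.get? 0 = some ⟨1, a⟩ := by simpa using (hs 0).1
  have h1 : g.s.get? 1 = some ⟨1, (6 : ℝ)⟩ := by simpa using (hs 0).2
  have h2 : g.s.get? 2 = some ⟨1, a⟩ := by simpa using (hs 1).1
  have n0 : g.nums 0 = 3 := by rw [zeroth_num_eq_h, hh]
  have d0 : g.dens 0 = 1 := zeroth_den_eq_one
  have n1 : g.nums 1 = a * g.h + 1 := g.first_num_eq h0
  rw [hh] at n1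
  have d1 : g.dens 1 = a := g.first_den_eq h0
  have n2 : g.nums 2 = 6 * g.nums 1 + 1 * g.nums 0 := g.nums_recurrence h1 rfl rfl
  have d2 : g.dens 2 = 6 * g.dens 1 + 1 * g.dens 0 := g.dens_recurrence h1 rfl rfl
  have n3 : g.nums 3 = a * g.nums 2 + 1 * g.nums 1 := g.nums_recurrence h2 rfl rfl
  have d3 : g.dens 3 = a * g.dens 2 + 1 * g.dens 1 := g.dens_recurrence h2 rfl rfl
  suffices H : ∀ m : ℕ,
      ((g.nums (m + 2) = (3 * a + 1) * g.nums m + (9 * a + 6) * g.dens m ∧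
        g.dens (m + 2) = a * g.nums m + (3 * a + 1) * g.dens m) ∧
       (g.nums (m + 3) = (3 * a + 1) * g.nums (m + 1) + (9 * a + 6) * g.dens (m + 1) ∧
        g.dens (m + 3) = a * g.nums (m + 1) + (3 * a + 1) * g.dens (m + 1))) by
    intro m; exact (H m).1
  intro m
  induction m with
  | zero =>
    refine ⟨⟨?_, ?_⟩, ?_, ?_⟩
    · show g.nums 2 = (3 * a + 1) * g.nums 0 + (9 * a + 6) * g.dens 0
      rw [n2, n1, n0, d0]; ring
    · show g.dens 2 = a * g.nums 0 + (3 * a + 1) * g.dens 0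
      rw [d2, d1, d0, n0]; ring
    · show g.nums 3 = (3 * a + 1) * g.nums 1 + (9 * a + 6) * g.dens 1
      rw [n3, n2, n1, n0, d1]; ring
    · show g.dens 3 = a * g.nums 1 + (3 * a + 1) * g.dens 1
      rw [d3, d2, d1, d0, n1]; ring
  | succ m ih =>
    refine ⟨ih.2, ?_, ?_⟩
    all_goals {
      obtain ⟨b, hb, hb2⟩ := hany (m + 1)
      have r4 : g.nums (m + 4) = b * g.nums (m + 3) + 1 * g.nums (m + 2) :=
        g.nums_recurrence hb2 rfl rfl
      have r2 : g.nums (m + 2) = b * g.nums (m + 1) + 1 * g.nums m :=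
        g.nums_recurrence hb rfl rfl
      have r4d : g.dens (m + 4) = b * g.dens (m + 3) + 1 * g.dens (m + 2) :=
        g.dens_recurrence hb2 rfl rfl
      have r2d : g.dens (m + 2) = b * g.dens (m + 1) + 1 * g.dens m :=
        g.dens_recurrence hb rfl rfl
      first
      | (show g.nums (m + 4) = (3 * a + 1) * g.nums (m + 2) + (9 * a + 6) * g.dens (m + 2)
         linear_combination r4 + b * ih.2.1 + ih.1.1 - (3 * a + 1) * r2 - (9 * a + 6) * r2d)
      | (show g.dens (m + 4) = a * g.nums (m + 2) + (3 * a + 1) * g.dens (m + 2)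
         linear_combination r4d + b * ih.2.2 + ih.1.2 - a * r2 - (3 * a + 1) * r2d)
    }

private lemma my_case (n : ℕ) (d : ℝ) (a : ℤ)
    (hnd : (n : ℝ) - 9 = d) (hd : 1 ≤ d) (had : (a : ℝ) * d = 6)
    (h16 : (n : ℝ) < 16) :
    ∀ m : ℕ,
      ((GenContFract.of (Real.sqrt n)).nums (m + 2) =
          (3 * ((a : ℤ) : ℝ) + 1) * (GenContFract.of (Real.sqrt n)).nums m
            + (9 * ((a : ℤ) : ℝ) + 6) * (GenContFract.of (Real.sqrt n)).dens m ∧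
       (GenContFract.of (Real.sqrt n)).dens (m + 2) =
          ((a : ℤ) : ℝ) * (GenContFract.of (Real.sqrt n)).nums m
            + (3 * ((a : ℤ) : ℝ) + 1) * (GenContFract.of (Real.sqrt n)).dens m) := by
  set v := Real.sqrt n with hv
  have hn0 : (0 : ℝ) ≤ (n : ℝ) := Nat.cast_nonneg n
  have hvv : v * v = (n : ℝ) := Real.mul_self_sqrt hn0
  have h3 : 3 < v := by
    nlinarith [Real.sqrt_nonneg (n : ℝ), hvv]
  have h4 : v < 4 := by
    nlinarith [Real.sqrt_nonneg (n : ℝ), hvv]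
  have hvd : (v - 3) * (v + 3) = d := by
    have : (v - 3) * (v + 3) = v * v - 9 := by ring
    rw [this, hvv, hnd]
  have hh : (GenContFract.of v).h = 3 := by
    rw [of_h_eq_floor]
    have hfl : ⌊v⌋ = (3 : ℤ) := by
      rw [Int.floor_eq_iff]
      push_cast
      constructor <;> linarith
    rw [hfl]
    norm_num
  exact my_master (GenContFract.of v) ((a : ℤ) : ℝ) hh (my_seq_lemma v d a hd had h3 h4 hvd)

/-- For `n ∈ {10,11,12}` and `a = 6/(n-9)`, the numerators and denominators of
the convergents of `√n` satisfy the two-step recurrences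
`p_{k+2} = (3a+1) p_k + (9a+6) q_k` and `q_{k+2} = a p_k + (3a+1) q_k`. -/
theorem convergents_two_step_recurrence (n : ℕ) (hn : n ∈ ({10, 11, 12} : Set ℕ))
    (k : ℕ) (hk : 1 ≤ k) :
    (GenContFract.of (Real.sqrt n)).nums (k + 1) =
        (3 * ((6 : ℝ) / ((n : ℝ) - 9)) + 1) * (GenContFract.of (Real.sqrt n)).nums (k - 1)
          + (9 * ((6 : ℝ) / ((n : ℝ) - 9)) + 6) * (GenContFract.of (Real.sqrt n)).dens (k - 1)
      ∧
    (GenContFract.of (Real.sqrt n)).dens (k + 1) =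
        ((6 : ℝ) / ((n : ℝ) - 9)) * (GenContFract.of (Real.sqrt n)).nums (k - 1)
          + (3 * ((6 : ℝ) / ((n : ℝ) - 9)) + 1) * (GenContFract.of (Real.sqrt n)).dens (k - 1) := by
  obtain ⟨m, rfl⟩ := Nat.exists_eq_add_of_le hk
  have e1 : 1 + m + 1 = m + 2 := by omega
  have e2 : 1 + m - 1 = m := by omega
  rw [e1, e2]
  simp only [Set.mem_insert_iff, Set.mem_singleton_iff] at hn
  rcases hn with rfl | rfl | rfl
  · have ha : (6 : ℝ) / (((10 : ℕ) : ℝ) - 9) = ((6 : ℤ) : ℝ) := by norm_num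
    rw [ha]
    exact my_case 10 1 6 (by norm_num) (by norm_num) (by norm_num) (by norm_num) m
  · have ha : (6 : ℝ) / (((11 : ℕ) : ℝ) - 9) = ((3 : ℤ) : ℝ) := by norm_num
    rw [ha]
    exact my_case 11 2 3 (by norm_num) (by norm_num) (by norm_num) (by norm_num) m
  · have ha : (6 : ℝ) / (((12 : ℕ) : ℝ) - 9) = ((2 : ℤ) : ℝ) := by norm_num
    rw [ha]
    exact my_case 12 3 2 (by norm_num) (by norm_num) (by norm_num) (by norm_num) m
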